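/- Let 𝒜 be an abelian category with enough injectives, let I be an injective object of 𝒜, let n ∈ ℤ, and let C^• be a cochain complex over 𝒜. Then the group of morphisms in the derived category D(𝒜) from C^• to the complex consisting of I concentrated in degree n is naturally isomorphic to Hom_𝒜(H^n(C^•), I). -/

import Mathlib

open CategoryTheory CategoryTheory.Limits

universe w v u

set_option linter.unusedSectionVars false

namespace DerivedSingleAux

open HomologicalComplex

variable {𝒜 : Type u} [Category.{v} 𝒜] [Abelian 𝒜]
variable (I : 𝒜) [Injective I] (n : ℤ)

/-- The map from chain maps to a single complex to homology homs. -/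
noncomputable def auxToHom (C : CochainComplex 𝒜 ℤ)
    (f : C ⟶ (single 𝒜 (ComplexShape.up ℤ) n).obj I) : C.homology n ⟶ I :=
  homologyMap f n ≫ (singleObjHomologySelfIso (ComplexShape.up ℤ) n I).hom

lemma homologyπ_auxToHom (C : CochainComplex 𝒜 ℤ)
    (f : C ⟶ (single 𝒜 (ComplexShape.up ℤ) n).obj I) :
    C.homologyπ n ≫ auxToHom I n C f =
      C.iCycles n ≫ f.f n ≫ (singleObjXSelf (ComplexShape.up ℤ) n I).hom := by
  dsimp [auxToHom]
  rw [homologyπ_naturality_assoc, homologyπ_singleObjHomologySelfIso_hom,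
    singleObjCyclesSelfIso_hom, cyclesMap_i_assoc]

lemma auxToHom_surjective (C : CochainComplex 𝒜 ℤ) (φ : C.homology n ⟶ I) :
    ∃ f, auxToHom I n C f = φ := by
  set ψ : C.cycles n ⟶ I := C.homologyπ n ≫ φ with hψ
  set f₀ : C.X n ⟶ I := Injective.factorThru ψ (C.iCycles n) with hf₀
  have hfac : C.iCycles n ≫ f₀ = ψ := Injective.comp_factorThru ψ (C.iCycles n)
  refine ⟨mkHomToSingle (f₀ ≫ 𝟙 I) (fun i hi => ?_), ?_⟩
  · rw [Category.comp_id, ← C.toCycles_i i n, Category.assoc, hfac, hψ,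
      C.toCycles_comp_homologyπ_assoc i n, zero_comp]
  · rw [← cancel_epi (C.homologyπ n), homologyπ_auxToHom, mkHomToSingle_f,
      Category.comp_id]
    simp [hfac, hψ]

noncomputable def auxNullHomotopic (C : CochainComplex 𝒜 ℤ)
    (f : C ⟶ (single 𝒜 (ComplexShape.up ℤ) n).obj I)
    (hf : auxToHom I n C f = 0) : Homotopy f 0 := by
  have h0 : C.iCycles n ≫ f.f n ≫ (singleObjXSelf (ComplexShape.up ℤ) n I).hom = 0 := by
    rw [← homologyπ_auxToHom, hf, comp_zero]
  set S : ShortComplex 𝒜 := ShortComplex.mk (C.iCycles n) (C.d n (n + 1))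
    (C.iCycles_d n (n + 1)) with hS
  have hSe : S.Exact := S.exact_of_f_is_kernel (C.cyclesIsKernel n (n + 1) (by simp))
  set h : C.X (n + 1) ⟶ I := hSe.descToInjective
    (f.f n ≫ (singleObjXSelf (ComplexShape.up ℤ) n I).hom) h0 with hh
  have hcomp : C.d n (n + 1) ≫ h = f.f n ≫ (singleObjXSelf (ComplexShape.up ℤ) n I).hom :=
    hSe.comp_descToInjective _ h0
  refine
    { hom := fun i j =>
        if hij : i = n + 1 ∧ j = n then
          eqToHom (congrArg C.X hij.1) ≫ h ≫ (singleObjXSelf (ComplexShape.up ℤ) n I).inv ≫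
            eqToHom (congrArg ((single 𝒜 (ComplexShape.up ℤ) n).obj I).X hij.2.symm)
        else 0
      zero := fun i j hij =>
        dif_neg (by rintro ⟨rfl, rfl⟩; exact hij (by simp))
      comm := fun i => by
        have hprev : prevD i
            (fun i j => if hij : i = n + 1 ∧ j = n then
              eqToHom (congrArg C.X hij.1) ≫ h ≫ (singleObjXSelf (ComplexShape.up ℤ) n I).inv ≫
                eqToHom (congrArg ((single 𝒜 (ComplexShape.up ℤ) n).obj I).X hij.2.symm)
              else 0) = 0 := comp_zero
        by_cases hi : n = i
        · subst hi
          rw [dNext_eq _ (show (ComplexShape.up ℤ).Rel n (n+1) by simp), dif_pos ⟨rfl, rfl⟩,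
            hprev, eqToHom_refl, eqToHom_refl, Category.id_comp, add_zero]
          dsimp
          rw [add_zero, Category.comp_id, ← Category.assoc, hcomp, Category.assoc,
            Iso.hom_inv_id, Category.comp_id]
        · exact (isZero_single_obj_X (ComplexShape.up ℤ) n I i (fun hh => hi hh.symm)).eq_of_tgt _ _ }

lemma auxToHom_sub (C : CochainComplex 𝒜 ℤ)
    (f₁ f₂ : C ⟶ (single 𝒜 (ComplexShape.up ℤ) n).obj I) :
    auxToHom I n C (f₁ - f₂) = auxToHom I n C f₁ - auxToHom I n C f₂ := by
  dsimp [auxToHom]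
  rw [show homologyMap (f₁ - f₂) n = (homologyFunctor 𝒜 (ComplexShape.up ℤ) n).map (f₁ - f₂)
    from rfl, Functor.map_sub]
  exact Preadditive.sub_comp _ _ _

lemma auxToHom_eq_iff (C : CochainComplex 𝒜 ℤ)
    (f₁ f₂ : C ⟶ (single 𝒜 (ComplexShape.up ℤ) n).obj I) :
    auxToHom I n C f₁ = auxToHom I n C f₂ ↔
      (HomotopyCategory.quotient 𝒜 (ComplexShape.up ℤ)).map f₁ =
        (HomotopyCategory.quotient 𝒜 (ComplexShape.up ℤ)).map f₂ := by
  constructor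
  · intro hfg
    apply HomotopyCategory.eq_of_homotopy
    exact Homotopy.equivSubZero.invFun
      (auxNullHomotopic I n C (f₁ - f₂) (by rw [auxToHom_sub, hfg, sub_self]))
  · intro hq
    have e := HomotopyCategory.homologyFunctorFactors 𝒜 (ComplexShape.up ℤ) n
    have h1 := e.hom.naturality f₁
    have h2 := e.hom.naturality f₂
    dsimp at h1 h2
    have key : homologyMap f₁ n = homologyMap f₂ n := by
      change (homologyFunctor 𝒜 (ComplexShape.up ℤ) n).map f₁ =
        (homologyFunctor 𝒜 (ComplexShape.up ℤ) n).map f₂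
      rw [← cancel_epi (e.hom.app C), ← h1, ← h2, hq]
    dsimp [auxToHom]
    rw [key]

lemma auxToHom_comp (C D : CochainComplex 𝒜 ℤ) (g : C ⟶ D)
    (f : D ⟶ (single 𝒜 (ComplexShape.up ℤ) n).obj I) :
    auxToHom I n C (g ≫ f) = homologyMap g n ≫ auxToHom I n D f := by
  dsimp [auxToHom]
  rw [homologyMap_comp, Category.assoc]

end DerivedSingleAux

/-- Let `𝒜` be an abelian category with enough injectives, `I` an
injective object, `n ∈ ℤ`.  Then for every cochain complex `C^•`, the group of morphisms
in the derived category `D(𝒜)` from `C^•` to the complex `I` concentrated in degree `n`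
is isomorphic to `Hom_𝒜(H^n(C^•), I)`, naturally in `C^•`. -/
theorem derivedCategory_hom_to_injective_single
    {𝒜 : Type u} [Category.{v} 𝒜] [Abelian 𝒜] [EnoughInjectives 𝒜]
    [HasDerivedCategory.{w} 𝒜]
    (I : 𝒜) (hI : Injective I) (n : ℤ) :
    ∃ e : ∀ C : CochainComplex 𝒜 ℤ,
        (DerivedCategory.Q.obj C ⟶ (DerivedCategory.singleFunctor 𝒜 n).obj I) ≃+
          (C.homology n ⟶ I),
      ∀ (C D : CochainComplex 𝒜 ℤ) (f : C ⟶ D)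
        (g : DerivedCategory.Q.obj D ⟶ (DerivedCategory.singleFunctor 𝒜 n).obj I),
        e C (DerivedCategory.Q.map f ≫ g) =
          HomologicalComplex.homologyMap f n ≫ e D g := by
  haveI := hI
  classical
  set J : CochainComplex 𝒜 ℤ := (HomologicalComplex.single 𝒜 (ComplexShape.up ℤ) n).obj I with hJ
  let γ : (DerivedCategory.singleFunctor 𝒜 n).obj I ≅ DerivedCategory.Q.obj J :=
    ((SingleFunctors.evaluation _ _ n).mapIso (DerivedCategory.singleFunctorsPostcompQIso 𝒜)).app I
  let eH := DerivedCategory.homologyFunctorFactors 𝒜 n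
  let Φ : ∀ C : CochainComplex 𝒜 ℤ,
      (DerivedCategory.Q.obj C ⟶ (DerivedCategory.singleFunctor 𝒜 n).obj I) →
        (C.homology n ⟶ I) :=
    fun C g => eH.inv.app C ≫ (DerivedCategory.homologyFunctor 𝒜 n).map (g ≫ γ.hom) ≫
      eH.hom.app J ≫ (HomologicalComplex.singleObjHomologySelfIso (ComplexShape.up ℤ) n I).hom
  -- the key compatibility
  have hΦQ : ∀ (C : CochainComplex 𝒜 ℤ) (f : C ⟶ J),
      Φ C (DerivedCategory.Q.map f ≫ γ.inv) = DerivedSingleAux.auxToHom I n C f := by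
    intro C f
    dsimp only [Φ]
    have hnat := eH.inv.naturality f
    dsimp at hnat
    simp only [Category.assoc, Iso.inv_hom_id, Category.comp_id]
    erw [← reassoc_of% hnat]
    erw [Iso.inv_hom_id_app_assoc]
    rfl
  -- surjectivity of Q on morphisms into J
  haveI : (HomotopyCategory.quasiIso 𝒜 (ComplexShape.up ℤ)).HasRightCalculusOfFractions := by
    rw [HomotopyCategory.quasiIso_eq_subcategoryAcyclic_W]
    infer_instance
  let β := DerivedCategory.quotientCompQhIso 𝒜
  have hQ : ∀ (C : CochainComplex 𝒜 ℤ) (f : C ⟶ J),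
      DerivedCategory.Q.map f = β.inv.app C ≫
        DerivedCategory.Qh.map ((HomotopyCategory.quotient 𝒜 (ComplexShape.up ℤ)).map f) ≫
        β.hom.app J := by
    intro C f
    have hnat2 := β.hom.naturality f
    dsimp at hnat2
    symm
    rw [hnat2, Iso.inv_hom_id_app_assoc]
  have QLoc : ∀ (C : CochainComplex 𝒜 ℤ) (g : DerivedCategory.Q.obj C ⟶ DerivedCategory.Q.obj J),
      ∃ f : C ⟶ J, DerivedCategory.Q.map f = g := by
    intro C g
    set u : DerivedCategory.Qh.obj ((HomotopyCategory.quotient 𝒜 (ComplexShape.up ℤ)).obj C) ⟶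
        DerivedCategory.Qh.obj ((HomotopyCategory.quotient 𝒜 (ComplexShape.up ℤ)).obj J) :=
      β.hom.app C ≫ g ≫ β.inv.app J with hu
    obtain ⟨φ, hφ⟩ := Localization.exists_rightFraction DerivedCategory.Qh
      (HomotopyCategory.quasiIso 𝒜 (ComplexShape.up ℤ)) u
    obtain ⟨s', hs'⟩ := (HomotopyCategory.quotient 𝒜 (ComplexShape.up ℤ)).map_surjective
      (show (HomotopyCategory.quotient 𝒜 (ComplexShape.up ℤ)).obj φ.X'.as ⟶
        (HomotopyCategory.quotient 𝒜 (ComplexShape.up ℤ)).obj C from φ.s)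
    obtain ⟨f', hf'⟩ := (HomotopyCategory.quotient 𝒜 (ComplexShape.up ℤ)).map_surjective
      (show (HomotopyCategory.quotient 𝒜 (ComplexShape.up ℤ)).obj φ.X'.as ⟶
        (HomotopyCategory.quotient 𝒜 (ComplexShape.up ℤ)).obj J from φ.f)
    replace hs' : (HomotopyCategory.quotient 𝒜 (ComplexShape.up ℤ)).map s' = φ.s := hs'
    replace hf' : (HomotopyCategory.quotient 𝒜 (ComplexShape.up ℤ)).map f' = φ.f := hf'
    have hs'W : HomologicalComplex.quasiIso 𝒜 (ComplexShape.up ℤ) s' := by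
      rw [← HomotopyCategory.quotient_map_mem_quasiIso_iff, hs']
      exact φ.hs
    haveI : QuasiIso s' := hs'W
    haveI : IsIso (HomologicalComplex.homologyMap s' n) := by
      rw [← quasiIsoAt_iff_isIso_homologyMap]
      infer_instance
    obtain ⟨v, hv⟩ := DerivedSingleAux.auxToHom_surjective I n C
      (inv (HomologicalComplex.homologyMap s' n) ≫ DerivedSingleAux.auxToHom I n _ f')
    have hsv : DerivedSingleAux.auxToHom I n _ (s' ≫ v) = DerivedSingleAux.auxToHom I n _ f' := by
      rw [DerivedSingleAux.auxToHom_comp, hv, ← Category.assoc, IsIso.hom_inv_id,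
        Category.id_comp]
    have hq2 : (HomotopyCategory.quotient 𝒜 (ComplexShape.up ℤ)).map (s' ≫ v) =
        (HomotopyCategory.quotient 𝒜 (ComplexShape.up ℤ)).map f' :=
      (DerivedSingleAux.auxToHom_eq_iff I n _ _ _).1 hsv
    have hfac : φ.f = φ.s ≫ (HomotopyCategory.quotient 𝒜 (ComplexShape.up ℤ)).map v := by
      rw [← hf', ← hq2, Functor.map_comp, hs']
      rfl
    haveI : IsIso (DerivedCategory.Qh.map φ.s) := Localization.inverts DerivedCategory.Qh
      (HomotopyCategory.quasiIso 𝒜 (ComplexShape.up ℤ)) _ φ.hs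
    have h1 : DerivedCategory.Qh.map φ.s ≫ u = DerivedCategory.Qh.map φ.f := by
      rw [hφ]
      exact φ.map_s_comp_map _ _
    rw [hfac, DerivedCategory.Qh.map_comp] at h1
    have h2 : u = DerivedCategory.Qh.map
        ((HomotopyCategory.quotient 𝒜 (ComplexShape.up ℤ)).map v) := by
      rwa [cancel_epi (DerivedCategory.Qh.map φ.s)] at h1
    refine ⟨v, ?_⟩
    have hg : g = β.inv.app C ≫ u ≫ β.hom.app J := by
      rw [hu]
      simp
    rw [hQ C v, ← h2, hg]
  -- additivity of Φ
  have hadd : ∀ (C : CochainComplex 𝒜 ℤ) g₁ g₂, Φ C (g₁ + g₂) = Φ C g₁ + Φ C g₂ := by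
    intro C g₁ g₂
    dsimp only [Φ]
    rw [Preadditive.add_comp, Functor.map_add, Preadditive.add_comp]
    exact Preadditive.comp_add _ _ _ _ _ _
  -- bijectivity of Φ
  have hbij : ∀ C : CochainComplex 𝒜 ℤ, Function.Bijective (Φ C) := by
    intro C
    constructor
    · intro g₁ g₂ hg
      obtain ⟨f₁, hf₁⟩ := QLoc C (g₁ ≫ γ.hom)
      obtain ⟨f₂, hf₂⟩ := QLoc C (g₂ ≫ γ.hom)
      have e₁ : g₁ = DerivedCategory.Q.map f₁ ≫ γ.inv := by
        rw [hf₁, Category.assoc, γ.hom_inv_id, Category.comp_id]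
      have e₂ : g₂ = DerivedCategory.Q.map f₂ ≫ γ.inv := by
        rw [hf₂, Category.assoc, γ.hom_inv_id, Category.comp_id]
      rw [e₁, e₂, hΦQ, hΦQ] at hg
      have hq3 := (DerivedSingleAux.auxToHom_eq_iff I n C f₁ f₂).1 hg
      rw [e₁, e₂, hQ C f₁, hQ C f₂, hq3]
    · intro φ
      obtain ⟨f, hf⟩ := DerivedSingleAux.auxToHom_surjective I n C φ
      exact ⟨DerivedCategory.Q.map f ≫ γ.inv, by rw [hΦQ, hf]⟩
  refine ⟨fun C => AddEquiv.mk' (Equiv.ofBijective _ (hbij C)) (hadd C), ?_⟩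
  intro C D f g
  show Φ C (DerivedCategory.Q.map f ≫ g) = HomologicalComplex.homologyMap f n ≫ Φ D g
  dsimp only [Φ]
  have hnat := eH.inv.naturality f
  dsimp at hnat
  rw [show (DerivedCategory.Q.map f ≫ g) ≫ γ.hom =
      DerivedCategory.Q.map f ≫ (g ≫ γ.hom) from Category.assoc _ _ _,
    Functor.map_comp]
  simp only [Category.assoc]
  erw [← reassoc_of% hnat]
  rfl
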